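/- If N ≥ 2 and P is a symmetric probability density on Λ^N, there exists a sequence P_n of symmetric probability densities on Λ^N with P_n > 0 a.e., P_n → P in L^1(Λ^N; d^N x), and each P_n satisfying: for a.e. x_N ∈ Λ there is γ_n(x_N) > 0 with P_n(·, x_N) ≥ γ_n(x_N) (P_n)_{(N-1)} a.e. on Λ^{N-1}. -/

import Mathlib

open MeasureTheory Filter

/-- Auxiliary: a σ-finite nonzero measure admits an everywhere positive probability density. -/
lemma exists_pos_prob_density {Λ : Type*} [MeasurableSpace Λ] (μ : Measure Λ)
    [SigmaFinite μ] (hμ : μ ≠ 0) :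
    ∃ g : Λ → ℝ, Measurable g ∧ (∀ x, 0 < g x) ∧ Integrable g μ ∧ ∫ x, g x ∂μ = 1 := by
  obtain ⟨g0, hpos, hmeas, hint⟩ :=
    exists_pos_lintegral_lt_of_sigmaFinite μ (ε := 1) one_ne_zero
  have hmeasR : Measurable fun x => (g0 x : ℝ) := hmeas.coe_nnreal_real
  have hintR : Integrable (fun x => (g0 x : ℝ)) μ := by
    refine ⟨hmeasR.aestronglyMeasurable, ?_⟩
    simpa [HasFiniteIntegral] using lt_of_lt_of_le hint le_top
  have hc : 0 < ∫ x, (g0 x : ℝ) ∂μ := by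
    refine (integral_pos_iff_support_of_nonneg
      (fun x => NNReal.coe_nonneg (g0 x)) hintR).2 ?_
    have hsupp : Function.support (fun x => (g0 x : ℝ)) = Set.univ := by
      ext x
      simp only [Function.mem_support, Set.mem_univ, iff_true]
      exact_mod_cast (hpos x).ne'
    rw [hsupp]
    simpa [pos_iff_ne_zero, Measure.measure_univ_eq_zero] using hμ
  set c := ∫ x, (g0 x : ℝ) ∂μ with hcdef
  refine ⟨fun x => (g0 x : ℝ) / c, hmeasR.div_const c, fun x => div_pos (hpos x) hc,
    hintR.div_const c, ?_⟩
  rw [integral_div]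
  exact div_self hc.ne'

theorem exists_approx_density_condition27 {Λ : Type*} [MeasurableSpace Λ] (μ : Measure Λ)
    [SigmaFinite μ] [μ.IsComplete] (hμ : μ ≠ 0) (n : ℕ) (hn : 1 ≤ n)
    (P : (Fin (n + 1) → Λ) → ℝ) (hPmeas : Measurable P) (hPnonneg : ∀ x, 0 ≤ P x)
    (hPsym : ∀ σ : Equiv.Perm (Fin (n + 1)), ∀ x, P (x ∘ σ) = P x)
    (hPint : Integrable P (Measure.pi fun _ : Fin (n + 1) => μ))
    (hPone : ∫ x, P x ∂(Measure.pi fun _ : Fin (n + 1) => μ) = 1) :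
    ∃ Q : ℕ → (Fin (n + 1) → Λ) → ℝ,
      (∀ j, Measurable (Q j) ∧
        (∀ σ : Equiv.Perm (Fin (n + 1)), ∀ x, Q j (x ∘ σ) = Q j x) ∧
        (∀ᵐ x ∂(Measure.pi fun _ : Fin (n + 1) => μ), 0 < Q j x) ∧
        Integrable (Q j) (Measure.pi fun _ : Fin (n + 1) => μ) ∧
        (∫ x, Q j x ∂(Measure.pi fun _ : Fin (n + 1) => μ)) = 1 ∧
        (∀ᵐ t ∂μ, ∃ γ : ℝ, 0 < γ ∧
          ∀ᵐ y ∂(Measure.pi fun _ : Fin n => μ),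
            γ * (∫ s, Q j (Fin.snoc y s) ∂μ) ≤ Q j (Fin.snoc y t))) ∧
      Tendsto (fun j => ∫ x, |Q j x - P x| ∂(Measure.pi fun _ : Fin (n + 1) => μ))
        atTop (nhds 0) := by
  classical
  letI : MeasureSpace Λ := ⟨μ⟩
  set π : Measure (Fin (n + 1) → Λ) := Measure.pi fun _ => μ with hπdef
  obtain ⟨g, hgmeas, hgpos, hgint, hgone⟩ := exists_pos_prob_density μ hμ
  -- the product density G
  set G : (Fin (n + 1) → Λ) → ℝ := fun x => ∏ i, g (x i) with hGdef
  have hGmeas : Measurable G :=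
    Finset.measurable_prod _ fun i _ => hgmeas.comp (measurable_pi_apply i)
  have hGpos : ∀ x, 0 < G x := fun x => Finset.prod_pos fun i _ => hgpos _
  have hGint : Integrable G π := by
    have : Integrable (fun x : Fin (n + 1) → Λ => ∏ i, g (x i)) volume :=
      Integrable.fintype_prod (f := fun _ : Fin (n + 1) => g) (fun _ => hgint)
    exact this
  have hGone : ∫ x, G x ∂π = 1 := by
    have : ∫ x : Fin (n + 1) → Λ, ∏ i, g (x i) = ∏ _i : Fin (n + 1), ∫ x, g x ∂μ :=
      integral_fintype_prod_eq_prod (fun _ => g)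
    simp only [hgone, Finset.prod_const_one] at this
    exact this
  have hGsym : ∀ σ : Equiv.Perm (Fin (n + 1)), ∀ x, G (x ∘ σ) = G x := by
    intro σ x
    exact Equiv.prod_comp σ (fun i => g (x i))
  have hGsnoc : ∀ (y : Fin n → Λ) (s : Λ),
      G (Fin.snoc y s) = (∏ i, g (y i)) * g s := by
    intro y s
    simp [hGdef, Fin.prod_univ_castSucc]
  -- parameters
  set δ : ℕ → ℝ := fun j => 1 / (j + 1) with hδdef
  have hδpos : ∀ j, 0 < δ j := fun j => by positivity
  have hδle : ∀ j, δ j ≤ 1 := fun j => by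
    rw [hδdef]
    rw [div_le_one (by positivity)]
    linarith [Nat.cast_nonneg (α := ℝ) j]
  have hδlim : Tendsto δ atTop (nhds 0) := tendsto_one_div_add_atTop_nhds_zero_nat
  -- truncation
  set T : ℕ → (Fin (n + 1) → Λ) → ℝ := fun j x => min (P x) ((j : ℝ) * G x) with hTdef
  have hTmeas : ∀ j, Measurable (T j) := fun j =>
    hPmeas.min (measurable_const.mul hGmeas)
  have hTnonneg : ∀ j x, 0 ≤ T j x := fun j x =>
    le_min (hPnonneg x) (mul_nonneg (Nat.cast_nonneg j) (hGpos x).le)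
  have hTleP : ∀ j x, T j x ≤ P x := fun j x => min_le_left _ _
  have hTleG : ∀ j x, T j x ≤ (j : ℝ) * G x := fun j x => min_le_right _ _
  have hTint : ∀ j, Integrable (T j) π := fun j =>
    hPint.mono' (hTmeas j).aestronglyMeasurable
      (Filter.Eventually.of_forall fun x => by
        rw [Real.norm_eq_abs, abs_of_nonneg (hTnonneg j x)]; exact hTleP j x)
  set a : ℕ → ℝ := fun j => ∫ x, T j x ∂π with hadef
  have ha0 : ∀ j, 0 ≤ a j := fun j =>
    integral_nonneg fun x => hTnonneg j x
  have ha1 : ∀ j, a j ≤ 1 := fun j => by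
    rw [hadef, ← hPone]
    exact integral_mono (hTint j) hPint fun x => hTleP j x
  have halim : Tendsto a atTop (nhds 1) := by
    rw [← hPone]
    refine tendsto_integral_of_dominated_convergence P
      (fun j => (hTmeas j).aestronglyMeasurable) hPint
      (fun j => Filter.Eventually.of_forall fun x => ?_)
      (Filter.Eventually.of_forall fun x => ?_)
    · rw [Real.norm_eq_abs, abs_of_nonneg (hTnonneg j x)]; exact hTleP j x
    · have hev : ∀ᶠ j in atTop, T j x = P x := by
        filter_upwards [eventually_ge_atTop ⌈P x / G x⌉₊] with j hj
        refine min_eq_left ?_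
        rw [← div_le_iff₀ (hGpos x)]
        exact (Nat.le_ceil _).trans (by exact_mod_cast hj)
      exact tendsto_const_nhds.congr' (hev.mono fun j hj => hj.symm)
  set b : ℕ → ℝ := fun j => 1 - (1 - δ j) * a j with hbdef
  have hbδ : ∀ j, δ j ≤ b j := fun j => by
    have := ha1 j; have := ha0 j; have := hδpos j; have := hδle j
    simp only [hbdef]; nlinarith
  have hb1 : ∀ j, b j ≤ 1 := fun j => by
    have := ha0 j; have := hδpos j; have := hδle j
    simp only [hbdef]; nlinarith
  -- the sequence
  set Q : ℕ → (Fin (n + 1) → Λ) → ℝ :=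
    fun j x => (1 - δ j) * T j x + b j * G x with hQdef
  have hQlb : ∀ j x, δ j * G x ≤ Q j x := fun j x => by
    have h1 := hTnonneg j x; have h2 := (hGpos x).le
    have h3 := hbδ j; have h4 := hδle j
    simp only [hQdef]; nlinarith
  have hQub : ∀ j x, Q j x ≤ ((j : ℝ) + 1) * G x := fun j x => by
    have h1 := hTnonneg j x; have h2 := (hGpos x).le
    have h3 := hb1 j; have h4 := hδle j; have h5 := (hδpos j).le
    have h6 := hTleG j x
    simp only [hQdef]; nlinarith
  have hQpos : ∀ j x, 0 < Q j x := fun j x =>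
    lt_of_lt_of_le (mul_pos (hδpos j) (hGpos x)) (hQlb j x)
  have hQmeas : ∀ j, Measurable (Q j) := fun j =>
    ((hTmeas j).const_mul _).add (hGmeas.const_mul _)
  have hQint : ∀ j, Integrable (Q j) π := fun j =>
    ((hTint j).const_mul _).add (hGint.const_mul _)
  refine ⟨Q, fun j => ⟨hQmeas j, ?_, ?_, hQint j, ?_, ?_⟩, ?_⟩
  · -- symmetry
    intro σ x
    have hT : T j (x ∘ σ) = T j x := by
      simp only [hTdef, hPsym σ x, hGsym σ x]
    simp only [hQdef, hT, hGsym σ x]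
  · exact Filter.Eventually.of_forall fun x => hQpos j x
  · -- integral one
    rw [hQdef]
    simp only
    rw [integral_add ((hTint j).const_mul _) (hGint.const_mul _),
      integral_const_mul, integral_const_mul, hGone]
    have haj : (∫ x, T j x ∂π) = a j := rfl
    have hbj : b j = 1 - (1 - δ j) * a j := rfl
    rw [haj, hbj]
    ring
  · -- condition (27)
    refine Filter.Eventually.of_forall fun t => ?_
    refine ⟨δ j * g t / ((j : ℝ) + 1),
      div_pos (mul_pos (hδpos j) (hgpos t)) (by positivity), ?_⟩
    refine Filter.Eventually.of_forall fun y => ?_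
    have hkey : ∫ s, Q j (Fin.snoc y s) ∂μ ≤ ((j : ℝ) + 1) * ∏ i, g (y i) := by
      have hle : ∫ s, Q j (Fin.snoc y s) ∂μ
          ≤ ∫ s, (((j : ℝ) + 1) * ∏ i, g (y i)) * g s ∂μ := by
        refine integral_mono_of_nonneg
          (Filter.Eventually.of_forall fun s => (hQpos j _).le)
          (hgint.const_mul _)
          (Filter.Eventually.of_forall fun s => ?_)
        have := hQub j (Fin.snoc y s)
        rw [hGsnoc y s] at this
        calc Q j (Fin.snoc y s) ≤ ((j : ℝ) + 1) * ((∏ i, g (y i)) * g s) := this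
          _ = (((j : ℝ) + 1) * ∏ i, g (y i)) * g s := by ring
      rw [integral_const_mul, hgone, mul_one] at hle
      exact hle
    have hγnn : 0 ≤ δ j * g t / ((j : ℝ) + 1) :=
      (div_pos (mul_pos (hδpos j) (hgpos t)) (by positivity)).le
    calc δ j * g t / ((j : ℝ) + 1) * ∫ s, Q j (Fin.snoc y s) ∂μ
        ≤ δ j * g t / ((j : ℝ) + 1) * (((j : ℝ) + 1) * ∏ i, g (y i)) :=
          mul_le_mul_of_nonneg_left hkey hγnn
      _ = δ j * g t * ∏ i, g (y i) := by
          have hj1 : ((j : ℝ) + 1) ≠ 0 := by positivity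
          field_simp
      _ = δ j * G (Fin.snoc y t) := by rw [hGsnoc]; ring
      _ ≤ Q j (Fin.snoc y t) := hQlb j _
  · -- L¹ convergence
    have hbound : ∀ j, ∫ x, |Q j x - P x| ∂π
        ≤ (1 - δ j) * (1 - a j) + δ j + b j := by
      intro j
      have hint1 : Integrable (fun x => |Q j x - P x|) π := ((hQint j).sub hPint).abs
      have hiA : Integrable (fun x => (1 - δ j) * (P x - T j x)) π := by
        exact (hPint.sub (hTint j)).const_mul _
      have hiB : Integrable (fun x => δ j * P x) π := hPint.const_mul _
      have hiC : Integrable (fun x => b j * G x) π := hGint.const_mul _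
      have hint2 : Integrable
          (fun x => (1 - δ j) * (P x - T j x) + δ j * P x + b j * G x) π :=
        (hiA.add hiB).add hiC
      have hle : ∀ x, |Q j x - P x|
          ≤ (1 - δ j) * (P x - T j x) + δ j * P x + b j * G x := by
        intro x
        have h1 := hTnonneg j x; have h2 := (hGpos x).le
        have h3 := hTleP j x; have h4 := hδle j; have h5 := (hδpos j).le
        have h6 := hbδ j; have h7 := (hδpos j).le.trans (hbδ j)
        rw [abs_le]
        constructor <;> simp only [hQdef] <;> nlinarith
      calc ∫ x, |Q j x - P x| ∂π
          ≤ ∫ x, ((1 - δ j) * (P x - T j x) + δ j * P x + b j * G x) ∂π :=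
            integral_mono hint1 hint2 hle
        _ = (1 - δ j) * (1 - a j) + δ j + b j := by
            have hiAB : Integrable
                (fun x => (1 - δ j) * (P x - T j x) + δ j * P x) π := hiA.add hiB
            rw [integral_add hiAB hiC, integral_add hiA hiB,
              integral_const_mul, integral_const_mul, integral_const_mul,
              integral_sub hPint (hTint j), hPone, hGone]
            have : a j = ∫ x, T j x ∂π := rfl
            rw [← this]
            ring
    have helim : Tendsto (fun j => (1 - δ j) * (1 - a j) + δ j + b j) atTop (nhds 0) := by
      have h1 : Tendsto (fun j => (1 - δ j) * (1 - a j)) atTop (nhds 0) := by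
        have := ((tendsto_const_nhds (x := (1:ℝ))).sub hδlim).mul
          ((tendsto_const_nhds (x := (1:ℝ))).sub halim)
        simpa using this
      have h2 : Tendsto b atTop (nhds 0) := by
        have := (tendsto_const_nhds (x := (1:ℝ))).sub
          (((tendsto_const_nhds (x := (1:ℝ))).sub hδlim).mul halim)
        simpa [hbdef] using this
      have := (h1.add hδlim).add h2
      simpa using this
    refine tendsto_of_tendsto_of_tendsto_of_le_of_le tendsto_const_nhds helim
      (fun j => integral_nonneg fun x => abs_nonneg _) hbound
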